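/- Let E be a real Banach space, let L¹,…,Lⁿ : E → ℝ be continuous linear forms with L¹ = 0 and such that the map w ↦ (L²(w),…,Lⁿ(w)) is surjective onto ℝ^{n−1}, and let Q¹,…,Qⁿ : E → ℝ be continuous quadratic forms, i.e. Q^j(w) = B^j(w,w) for continuous symmetric bilinear forms B^j on E. Assume there exist bounded sequences (w_k⁺) and (w_k⁻) in E such that for every j, L^j(w_k^±) → 0 as k → ∞, and Q¹(w_k⁺) → 1, Q¹(w_k⁻) → −1. Then there exists a neighborhood U of 0 in ℝⁿ such that for every u = (u₁,…,u_n) ∈ U there exists w ∈ E with u_j = L^j(w) + Q^j(w) for all j = 1,…,n. -/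

import Mathlib

open Filter

lemma exists_fixed_point_aux {X : Type*} [NormedAddCommGroup X] [CompleteSpace X]
    {r : ℝ} (hr : 0 ≤ r) (G : X → X)
    (hinv : ∀ y, ‖y‖ ≤ r → ‖G y‖ ≤ r)
    (hlip : ∀ y y', ‖y‖ ≤ r → ‖y'‖ ≤ r →
      dist (G y) (G y') ≤ (1 / 2) * dist y y') :
    ∃ y, ‖y‖ ≤ r ∧ G y = y := by
  have hmem : ∀ y : Metric.closedBall (0 : X) r, G y.1 ∈ Metric.closedBall (0 : X) r := by
    intro y
    have h1 : ‖(y : X)‖ ≤ r := by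
      have := y.2
      rwa [Metric.mem_closedBall, dist_zero_right] at this
    rw [Metric.mem_closedBall, dist_zero_right]; exact hinv y.1 h1
  haveI : Nonempty (Metric.closedBall (0 : X) r) :=
    ⟨⟨0, by simpa [Metric.mem_closedBall] using hr⟩⟩
  haveI : CompleteSpace (Metric.closedBall (0 : X) r) :=
    IsClosed.completeSpace_coe (hs := Metric.isClosed_closedBall)
  set F : Metric.closedBall (0 : X) r → Metric.closedBall (0 : X) r :=
    fun y => ⟨G y.1, hmem y⟩ with hF
  have hcw : ContractingWith (1 / 2 : NNReal) F := by
    constructor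
    · rw [← NNReal.coe_lt_coe]; norm_num
    · apply LipschitzWith.of_dist_le_mul
      intro x y
      have hx : ‖(x : X)‖ ≤ r := by
        have := x.2; rwa [Metric.mem_closedBall, dist_zero_right] at this
      have hy : ‖(y : X)‖ ≤ r := by
        have := y.2; rwa [Metric.mem_closedBall, dist_zero_right] at this
      have h := hlip x.1 y.1 hx hy
      have hc : ((1 / 2 : NNReal) : ℝ) = 1 / 2 := by norm_num
      rw [Subtype.dist_eq, Subtype.dist_eq, hc]
      simpa [hF] using h
  refine ⟨(ContractingWith.fixedPoint F hcw).1, ?_, ?_⟩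
  · have h2 := (ContractingWith.fixedPoint F hcw).2
    rwa [Metric.mem_closedBall, dist_zero_right] at h2
  · have h := hcw.fixedPoint_isFixedPt
    exact congrArg Subtype.val h


set_option maxHeartbeats 4000000 in
/-- abstract form of Proposition II.6 of the paper, surjectivity of
the 2-jet. Let `L¹,…,Lⁿ` be continuous linear forms on a real Banach space `E` with
`L¹ = 0` and `w ↦ (L²(w),…,Lⁿ(w))` surjective onto `ℝ^{n−1}`, and let
`Q^j(w) = B^j(w,w)` be continuous quadratic forms.  If there are bounded sequences
`(w_k⁺)`, `(w_k⁻)` with `L^j(w_k^±) → 0` for every `j`, `Q¹(w_k⁺) → 1` and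
`Q¹(w_k⁻) → −1`, then some neighborhood `U` of `0` in `ℝⁿ` satisfies: for every
`u ∈ U` there is `w ∈ E` with `u_j = L^j(w) + Q^j(w)` for all `j`. -/
theorem statement11
    {E : Type*} [NormedAddCommGroup E] [NormedSpace ℝ E] [CompleteSpace E]
    {n : ℕ} (hn : 1 ≤ n)
    (L : Fin n → E →L[ℝ] ℝ)
    (B : Fin n → E →L[ℝ] E →L[ℝ] ℝ)
    (hBsymm : ∀ j x y, B j x y = B j y x)
    (hL1 : L ⟨0, hn⟩ = 0)
    (hsurj : Function.Surjective
      (fun w : E => fun j : {i : Fin n // i ≠ ⟨0, hn⟩} => L j.1 w))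
    (wp wm : ℕ → E)
    (hwpbdd : ∃ C, ∀ k, ‖wp k‖ ≤ C) (hwmbdd : ∃ C, ∀ k, ‖wm k‖ ≤ C)
    (hLp : ∀ j, Tendsto (fun k => L j (wp k)) atTop (nhds 0))
    (hLm : ∀ j, Tendsto (fun k => L j (wm k)) atTop (nhds 0))
    (hQp : Tendsto (fun k => B ⟨0, hn⟩ (wp k) (wp k)) atTop (nhds 1))
    (hQm : Tendsto (fun k => B ⟨0, hn⟩ (wm k) (wm k)) atTop (nhds (-1))) :
    ∃ U ∈ nhds (0 : Fin n → ℝ), ∀ u ∈ U, ∃ w : E, ∀ j, u j = L j w + B j w w := by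
  classical
  set j0 : Fin n := ⟨0, hn⟩ with hj0
  -- right inverse of the linear part
  choose s hs using fun i : {i : Fin n // i ≠ j0} => hsurj (Pi.single i (1 : ℝ))
  set Sv : ({i : Fin n // i ≠ j0} → ℝ) → E := fun v => ∑ i, v i • s i with hSv
  have hSL : ∀ (j : {i : Fin n // i ≠ j0}) v, L j.1 (Sv v) = v j := by
    intro j v
    have h2 : ∀ i : {i : Fin n // i ≠ j0}, L j.1 (s i) = if j = i then 1 else 0 := by
      intro i
      have h := congrFun (hs i) j
      simpa [Pi.single_apply] using h
    calc L j.1 (Sv v) = ∑ i, v i * L j.1 (s i) := by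
          simp [hSv, map_sum, map_smul, smul_eq_mul]
      _ = ∑ i, if j = i then v i else 0 := by
          refine Finset.sum_congr rfl fun i _ => ?_
          rw [h2 i]; split_ifs <;> simp
      _ = v j := by simp
  have hSsub : ∀ v v', Sv v - Sv v' = Sv (v - v') := by
    intro v v'
    simp [hSv, sub_smul, Finset.sum_sub_distrib]
  -- the big constant A
  obtain ⟨Cp, hCp⟩ := hwpbdd
  obtain ⟨Cm, hCm⟩ := hwmbdd
  set A : ℝ := (1 + ∑ j, ‖B j‖) + (1 + ∑ i, ‖s i‖) + (1 + max Cp Cm) + (1 + ∑ j, ‖L j‖)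
    with hA
  have hBsum : (0:ℝ) ≤ ∑ j, ‖B j‖ := Finset.sum_nonneg fun j _ => ContinuousLinearMap.opNorm_nonneg _
  have hssum : (0:ℝ) ≤ ∑ i : {i : Fin n // i ≠ j0}, ‖s i‖ :=
    Finset.sum_nonneg fun _ _ => norm_nonneg _
  have hLsum : (0:ℝ) ≤ ∑ j, ‖L j‖ := Finset.sum_nonneg fun j _ => ContinuousLinearMap.opNorm_nonneg _
  have hCp0 : (0:ℝ) ≤ Cp := le_trans (norm_nonneg _) (hCp 0)
  have hmax0 : (0:ℝ) ≤ max Cp Cm := le_trans hCp0 (le_max_left _ _)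
  have hA1 : 1 ≤ A := by rw [hA]; linarith
  have hA0 : (0:ℝ) < A := by linarith
  have hAB : ∀ (j : Fin n) x z, |B j x z| ≤ A * ‖x‖ * ‖z‖ := by
    intro j x z
    have h1 : |B j x z| ≤ ‖B j‖ * ‖x‖ * ‖z‖ := by
      calc |B j x z| = ‖B j x z‖ := (Real.norm_eq_abs _).symm
        _ ≤ ‖B j x‖ * ‖z‖ := (B j x).le_opNorm z
        _ ≤ ‖B j‖ * ‖x‖ * ‖z‖ :=
            mul_le_mul_of_nonneg_right ((B j).le_opNorm x) (norm_nonneg _)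
    have h2 : ‖B j‖ ≤ A := by
      have := Finset.single_le_sum (f := fun j => ‖B j‖)
        (fun i _ => ContinuousLinearMap.opNorm_nonneg _) (Finset.mem_univ j)
      rw [hA]; linarith
    calc |B j x z| ≤ ‖B j‖ * ‖x‖ * ‖z‖ := h1
      _ ≤ A * ‖x‖ * ‖z‖ := by
          apply mul_le_mul_of_nonneg_right _ (norm_nonneg z)
          exact mul_le_mul_of_nonneg_right h2 (norm_nonneg x)
  have hAL : ∀ (j : Fin n) x, |L j x| ≤ A * ‖x‖ := by
    intro j x
    have h1 : |L j x| ≤ ‖L j‖ * ‖x‖ := by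
      calc |L j x| = ‖L j x‖ := (Real.norm_eq_abs _).symm
        _ ≤ ‖L j‖ * ‖x‖ := (L j).le_opNorm x
    have h2 : ‖L j‖ ≤ A := by
      have := Finset.single_le_sum (f := fun j => ‖L j‖)
        (fun i _ => ContinuousLinearMap.opNorm_nonneg _) (Finset.mem_univ j)
      rw [hA]; linarith
    calc |L j x| ≤ ‖L j‖ * ‖x‖ := h1
      _ ≤ A * ‖x‖ := mul_le_mul_of_nonneg_right h2 (norm_nonneg x)
  have hAS : ∀ v, ‖Sv v‖ ≤ A * ‖v‖ := by
    intro v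
    have h1 : ‖Sv v‖ ≤ ∑ i, ‖v i • s i‖ := by
      simp only [hSv]; exact norm_sum_le _ _
    have h2 : ∀ i : {i : Fin n // i ≠ j0}, ‖v i • s i‖ ≤ ‖v‖ * ‖s i‖ := by
      intro i
      rw [norm_smul]
      exact mul_le_mul_of_nonneg_right (norm_le_pi_norm v i) (norm_nonneg _)
    have h3 : ‖Sv v‖ ≤ ∑ i : {i : Fin n // i ≠ j0}, ‖v‖ * ‖s i‖ :=
      le_trans h1 (Finset.sum_le_sum fun i _ => h2 i)
    rw [← Finset.mul_sum] at h3
    have h4 : (∑ i : {i : Fin n // i ≠ j0}, ‖s i‖) ≤ A := by rw [hA]; linarith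
    calc ‖Sv v‖ ≤ ‖v‖ * (∑ i : {i : Fin n // i ≠ j0}, ‖s i‖) := h3
      _ ≤ ‖v‖ * A := mul_le_mul_of_nonneg_left h4 (norm_nonneg v)
      _ = A * ‖v‖ := mul_comm _ _
  have hSvcont : Continuous Sv := by
    simp only [hSv]
    exact continuous_finset_sum _ fun i _ => (continuous_apply i).smul continuous_const
  clear_value Sv
  have hApw : ∀ k, ‖wp k‖ ≤ A := by
    intro k
    have := hCp k
    have h := le_max_left Cp Cm
    rw [hA]; linarith
  have hAmw : ∀ k, ‖wm k‖ ≤ A := by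
    intro k
    have := hCm k
    have h := le_max_right Cp Cm
    rw [hA]; linarith
  clear_value A
  -- choice of the small scale T
  set T : ℝ := (1024 * A ^ 9)⁻¹ with hT
  have hT0 : 0 < T := by rw [hT]; positivity
  have hTkey : 1024 * A ^ 9 * T = 1 := by
    rw [hT]; field_simp
  clear_value T
  have hA3 : (1:ℝ) ≤ A ^ 3 := by
    calc (1:ℝ) = 1 ^ 3 := by norm_num
      _ ≤ A ^ 3 := pow_le_pow_left₀ (by norm_num) hA1 3
  have hA36 : A ^ 3 ≤ A ^ 9 := pow_le_pow_right₀ hA1 (by norm_num)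
  have hA6 : (1:ℝ) ≤ A ^ 6 := by
    calc (1:ℝ) = 1 ^ 6 := by norm_num
      _ ≤ A ^ 6 := pow_le_pow_left₀ (by norm_num) hA1 6
  have hA69 : A ^ 6 ≤ A ^ 9 := pow_le_pow_right₀ hA1 (by norm_num)
  have hbd1 : 8 * A ^ 3 * T ≤ 1 := by
    have h := mul_le_mul_of_nonneg_right hA36 hT0.le
    linarith [hTkey]
  have hbd2 : 16 * A ^ 6 * T ≤ 1 / 64 := by
    have h := mul_le_mul_of_nonneg_right hA69 hT0.le
    linarith [hTkey]
  have hbd3 : 64 * A ^ 9 * T ≤ 1 / 16 := by linarith [hTkey]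
  have hT1 : T ≤ 1 := by
    have h1 := mul_le_mul_of_nonneg_right hA3 hT0.le
    have h2 := mul_le_mul_of_nonneg_right hA36 hT0.le
    linarith [hTkey]
  set r : ℝ := 8 * A ^ 3 * T ^ 2 with hr
  have hr0 : (0:ℝ) ≤ r := by positivity
  have hrT : r ≤ T := by
    have h := mul_le_mul_of_nonneg_right hbd1 hT0.le
    rw [hr]; linarith
  clear_value r
  set ρ : ℝ := T ^ 2 / 2 with hρ
  have hρ0 : (0:ℝ) < ρ := by positivity
  clear_value ρ
  -- choice of k
  have habs : ∀ᶠ x : ℝ in nhds 0, |x| ≤ T := by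
    filter_upwards [Metric.ball_mem_nhds (0:ℝ) hT0] with x hx
    rw [Metric.mem_ball, Real.dist_eq, sub_zero] at hx
    exact hx.le
  have hev : ∀ᶠ k in atTop,
      ((∀ j, |L j (wp k)| ≤ T) ∧ (∀ j, |L j (wm k)| ≤ T)) ∧
      (3/4 ≤ B j0 (wp k) (wp k) ∧ B j0 (wm k) (wm k) ≤ -(3/4)) := by
    refine Filter.Eventually.and (Filter.Eventually.and ?_ ?_) (Filter.Eventually.and ?_ ?_)
    · exact Filter.eventually_all.2 fun j => (hLp j).eventually habs
    · exact Filter.eventually_all.2 fun j => (hLm j).eventually habs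
    · exact hQp.eventually (eventually_ge_nhds (by norm_num))
    · exact hQm.eventually (eventually_le_nhds (by norm_num))
  obtain ⟨k, ⟨hLa, hLb⟩, hQa, hQb⟩ := hev.exists
  set a : E := wp k with ha'
  set b : E := wm k with hb'
  have haA : ‖a‖ ≤ A := hApw k
  have hbA : ‖b‖ ≤ A := hAmw k
  clear_value a b
  -- the path  t ↦ φ t
  set tp : ℝ → ℝ := fun t => max (max (-T) (min T t)) 0 with htp'
  set tm : ℝ → ℝ := fun t => max (-(max (-T) (min T t))) 0 with htm'
  set φ : ℝ → E := fun t => tp t • a + tm t • b with hφ'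
  have htp0 : ∀ t, 0 ≤ tp t := fun t => by
    simp only [htp']; exact le_max_right _ _
  have htm0 : ∀ t, 0 ≤ tm t := fun t => by
    simp only [htm']; exact le_max_right _ _
  have htpT : ∀ t, tp t ≤ T := by
    intro t
    simp only [htp']
    apply max_le _ hT0.le
    exact max_le (by linarith) (min_le_left _ _)
  have htmT : ∀ t, tm t ≤ T := by
    intro t
    simp only [htm']
    apply max_le _ hT0.le
    have h := le_max_left (-T) (min T t)
    linarith
  have hsum : ∀ t, tp t + tm t ≤ T := by
    intro t
    rcases le_total 0 (max (-T) (min T t)) with h | h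
    · have h1 : tm t = 0 := by simp only [htm']; exact max_eq_right (by linarith)
      have := htpT t
      simp only [h1]; linarith
    · have h1 : tp t = 0 := by simp only [htp']; exact max_eq_right h
      have := htmT t
      simp only [h1]; linarith
  have hclip : ∀ t t', |tp t - tp t'| ≤ |t - t'| ∧ |tm t - tm t'| ≤ |t - t'| := by
    intro t t'
    have hmin : |min T t - min T t'| ≤ |t - t'| := by
      have := abs_min_sub_min_le_max T t T t'
      simpa using this
    have hinn : |max (-T) (min T t) - max (-T) (min T t')| ≤ |t - t'| := by
      have h := abs_max_sub_max_le_max (-T) (min T t) (-T) (min T t')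
      rw [sub_self, abs_zero, max_eq_right (abs_nonneg (min T t - min T t'))] at h
      exact le_trans h hmin
    constructor
    · simp only [htp']
      have h := abs_max_sub_max_le_abs (max (-T) (min T t)) (max (-T) (min T t')) 0
      exact le_trans h hinn
    · simp only [htm']
      have h1 := abs_max_sub_max_le_abs (-(max (-T) (min T t))) (-(max (-T) (min T t'))) 0
      have h2 : |(-(max (-T) (min T t))) - (-(max (-T) (min T t')))|
          = |max (-T) (min T t) - max (-T) (min T t')| := by
        rw [← abs_sub_comm]; ring_nf
      rw [h2] at h1
      exact le_trans h1 hinn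
  have hφn : ∀ t, ‖φ t‖ ≤ A * T := by
    intro t
    calc ‖φ t‖ ≤ ‖tp t • a‖ + ‖tm t • b‖ := by
          simp only [hφ']; exact norm_add_le _ _
      _ = |tp t| * ‖a‖ + |tm t| * ‖b‖ := by
          rw [norm_smul, norm_smul, Real.norm_eq_abs, Real.norm_eq_abs]
      _ ≤ tp t * A + tm t * A := by
          rw [abs_of_nonneg (htp0 t), abs_of_nonneg (htm0 t)]
          exact add_le_add (mul_le_mul_of_nonneg_left haA (htp0 t))
            (mul_le_mul_of_nonneg_left hbA (htm0 t))
      _ = (tp t + tm t) * A := by ring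
      _ ≤ T * A := mul_le_mul_of_nonneg_right (hsum t) hA0.le
      _ = A * T := mul_comm _ _
  have hφlip : ∀ t t', ‖φ t - φ t'‖ ≤ 2 * A * |t - t'| := by
    intro t t'
    have hdec : φ t - φ t' = (tp t - tp t') • a + (tm t - tm t') • b := by
      simp only [hφ', sub_smul]; abel
    calc ‖φ t - φ t'‖ = ‖(tp t - tp t') • a + (tm t - tm t') • b‖ := by rw [hdec]
      _ ≤ ‖(tp t - tp t') • a‖ + ‖(tm t - tm t') • b‖ := norm_add_le _ _
      _ = |tp t - tp t'| * ‖a‖ + |tm t - tm t'| * ‖b‖ := by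
          rw [norm_smul, norm_smul, Real.norm_eq_abs, Real.norm_eq_abs]
      _ ≤ |t - t'| * A + |t - t'| * A := by
          exact add_le_add
            (mul_le_mul (hclip t t').1 haA (norm_nonneg _) (abs_nonneg _))
            (mul_le_mul (hclip t t').2 hbA (norm_nonneg _) (abs_nonneg _))
      _ = 2 * A * |t - t'| := by ring
  have hLφ : ∀ t (j : Fin n), |L j (φ t)| ≤ T ^ 2 := by
    intro t j
    have hexp : L j (φ t) = tp t * L j a + tm t * L j b := by
      simp [hφ', map_add, map_smul, smul_eq_mul]
    rw [hexp]
    have h1 : |tp t * L j a + tm t * L j b| ≤ tp t * |L j a| + tm t * |L j b| := by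
      calc |tp t * L j a + tm t * L j b| ≤ |tp t * L j a| + |tm t * L j b| := abs_add_le _ _
        _ = tp t * |L j a| + tm t * |L j b| := by
            rw [abs_mul, abs_mul, abs_of_nonneg (htp0 t), abs_of_nonneg (htm0 t)]
    have h2 : tp t * |L j a| ≤ tp t * T := mul_le_mul_of_nonneg_left (hLa j) (htp0 t)
    have h3 : tm t * |L j b| ≤ tm t * T := mul_le_mul_of_nonneg_left (hLb j) (htm0 t)
    have h4 : tp t * T + tm t * T ≤ T * T := by
      have h5 := mul_le_mul_of_nonneg_right (hsum t) hT0.le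
      linarith
    linarith [h1]
  have hφcont : Continuous φ := by
    simp only [hφ', htp', htm']
    apply Continuous.add
    · exact ((continuous_const.max (continuous_const.min continuous_id)).max
        continuous_const).smul continuous_const
    · exact (((continuous_const.max (continuous_const.min continuous_id)).neg).max
        continuous_const).smul continuous_const
  have hφT : φ T = T • a := by
    have h1 : min T T = T := min_self T
    have h2 : max (-T) T = T := max_eq_right (by linarith)
    have h3 : max T 0 = T := max_eq_left hT0.le
    have h4 : max (-T) 0 = 0 := max_eq_right (by linarith)
    simp only [hφ', htp', htm', h1, h2, h3, h4, zero_smul, add_zero]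
  have hφmT : φ (-T) = T • b := by
    have h1 : min T (-T) = -T := min_eq_right (by linarith)
    have h2 : max (-T) (-T) = -T := max_self _
    have h3 : max (-T) 0 = 0 := max_eq_right (by linarith)
    have h4 : max (- -T) 0 = T := by rw [neg_neg]; exact max_eq_left hT0.le
    simp only [hφ', htp', htm', h1, h2, h3, h4, zero_smul, zero_add]
  clear_value tp tm φ
  -- quadratic-form difference identity
  have hQsub : ∀ (j : Fin n) p q, B j p p - B j q q = B j (p + q) (p - q) := by
    intro j p q
    have h := hBsymm j q p
    simp only [map_add, map_sub, ContinuousLinearMap.add_apply, ContinuousLinearMap.sub_apply,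
      ContinuousLinearMap.coe_sub', Pi.sub_apply]
    linarith
  -- the neighborhood
  refine ⟨Metric.ball 0 ρ, Metric.ball_mem_nhds _ hρ0, ?_⟩
  intro u hu
  have hu' : ∀ j : Fin n, |u j| ≤ ρ := by
    intro j
    have h1 : ‖u‖ < ρ := by
      rw [Metric.mem_ball, dist_zero_right] at hu; exact hu
    have h2 : |u j| ≤ ‖u‖ := by
      have := norm_le_pi_norm u j
      rwa [Real.norm_eq_abs] at this
    linarith
  -- the fixed point map
  set G : ℝ → ({i : Fin n // i ≠ j0} → ℝ) → ({i : Fin n // i ≠ j0} → ℝ) :=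
    fun t y j => u j.1 - L j.1 (φ t) - B j.1 (φ t + Sv y) (φ t + Sv y) with hG
  clear_value G
  have hinv : ∀ t y, ‖y‖ ≤ r → ‖G t y‖ ≤ r := by
    intro t y hy
    rw [pi_norm_le_iff_of_nonneg hr0]
    intro j
    rw [Real.norm_eq_abs]
    have h1 : |u j.1| ≤ ρ := hu' j.1
    have h2 : |L j.1 (φ t)| ≤ T ^ 2 := hLφ t j.1
    have hSy : ‖Sv y‖ ≤ A * r :=
      le_trans (hAS y) (mul_le_mul_of_nonneg_left hy hA0.le)
    have h3 : ‖φ t + Sv y‖ ≤ A * T + A * r :=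
      le_trans (norm_add_le _ _) (add_le_add (hφn t) hSy)
    have h4 : |B j.1 (φ t + Sv y) (φ t + Sv y)| ≤ A * (A * T + A * r) * (A * T + A * r) := by
      refine le_trans (hAB j.1 _ _) ?_
      have h0 : (0:ℝ) ≤ A * T + A * r := by positivity
      have c1 : A * ‖φ t + Sv y‖ ≤ A * (A * T + A * r) :=
        mul_le_mul_of_nonneg_left h3 hA0.le
      calc A * ‖φ t + Sv y‖ * ‖φ t + Sv y‖
          ≤ A * (A * T + A * r) * ‖φ t + Sv y‖ :=
            mul_le_mul_of_nonneg_right c1 (norm_nonneg _)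
        _ ≤ A * (A * T + A * r) * (A * T + A * r) :=
            mul_le_mul_of_nonneg_left h3 (by positivity)
    have hquad : A * (A * T + A * r) * (A * T + A * r) ≤ 4 * A ^ 3 * T ^ 2 := by
      have e1 : A * (A * T + A * r) * (A * T + A * r) = A ^ 3 * (T + r) ^ 2 := by ring
      have e2 : T + r ≤ 2 * T := by linarith
      have e3 : (T + r) ^ 2 ≤ (2 * T) ^ 2 := by nlinarith [hT0, hr0]
      have e4 : A ^ 3 * (T + r) ^ 2 ≤ A ^ 3 * (2 * T) ^ 2 :=
        mul_le_mul_of_nonneg_left e3 (by positivity)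
      rw [e1]
      linarith [e4]
    have habs3 : |G t y j| ≤ |u j.1| + |L j.1 (φ t)|
        + |B j.1 (φ t + Sv y) (φ t + Sv y)| := by
      simp only [hG]
      calc |u j.1 - L j.1 (φ t) - B j.1 (φ t + Sv y) (φ t + Sv y)|
          ≤ |u j.1 - L j.1 (φ t)| + |B j.1 (φ t + Sv y) (φ t + Sv y)| := abs_sub _ _
        _ ≤ |u j.1| + |L j.1 (φ t)| + |B j.1 (φ t + Sv y) (φ t + Sv y)| := by
            have := abs_sub (u j.1) (L j.1 (φ t))
            linarith
    have hkey : ρ + T ^ 2 + 4 * A ^ 3 * T ^ 2 ≤ r := by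
      rw [hρ, hr]
      have h := mul_le_mul_of_nonneg_right hA3 (sq_nonneg T)
      linarith
    linarith
  have hcon : ∀ t y y', ‖y‖ ≤ r → ‖y'‖ ≤ r →
      dist (G t y) (G t y') ≤ (1 / 2) * dist y y' := by
    intro t y y' hy hy'
    rw [dist_pi_le_iff (by positivity)]
    intro j
    rw [Real.dist_eq]
    have hdd : G t y j - G t y' j
        = B j.1 ((φ t + Sv y') + (φ t + Sv y)) (Sv (y' - y)) := by
      have h0 : G t y j - G t y' j
          = B j.1 (φ t + Sv y') (φ t + Sv y') - B j.1 (φ t + Sv y) (φ t + Sv y) := by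
        simp only [hG]; ring
      rw [h0, hQsub j.1 (φ t + Sv y') (φ t + Sv y)]
      have h00 : (φ t + Sv y') - (φ t + Sv y) = Sv (y' - y) := by
        rw [← hSsub]; abel
      rw [h00]
    rw [hdd]
    have hX : ‖(φ t + Sv y') + (φ t + Sv y)‖ ≤ 2 * A * T + 2 * A * r := by
      have hSy : ‖Sv y‖ ≤ A * r := le_trans (hAS y) (mul_le_mul_of_nonneg_left hy hA0.le)
      have hSy' : ‖Sv y'‖ ≤ A * r := le_trans (hAS y') (mul_le_mul_of_nonneg_left hy' hA0.le)
      calc ‖(φ t + Sv y') + (φ t + Sv y)‖ ≤ ‖φ t + Sv y'‖ + ‖φ t + Sv y‖ := norm_add_le _ _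
        _ ≤ (‖φ t‖ + ‖Sv y'‖) + (‖φ t‖ + ‖Sv y‖) :=
            add_le_add (norm_add_le _ _) (norm_add_le _ _)
        _ ≤ (A * T + A * r) + (A * T + A * r) := by
            have := hφn t; linarith
        _ = 2 * A * T + 2 * A * r := by ring
    have hY : ‖Sv (y' - y)‖ ≤ A * dist y y' := by
      have := hAS (y' - y)
      calc ‖Sv (y' - y)‖ ≤ A * ‖y' - y‖ := this
        _ = A * dist y y' := by rw [dist_eq_norm, norm_sub_rev]
    have c1 := hAB j.1 ((φ t + Sv y') + (φ t + Sv y)) (Sv (y' - y))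
    have c2 : A * ‖(φ t + Sv y') + (φ t + Sv y)‖ * ‖Sv (y' - y)‖
        ≤ A * (2 * A * T + 2 * A * r) * (A * dist y y') := by
      have d1 : A * ‖(φ t + Sv y') + (φ t + Sv y)‖ ≤ A * (2 * A * T + 2 * A * r) :=
        mul_le_mul_of_nonneg_left hX hA0.le
      calc A * ‖(φ t + Sv y') + (φ t + Sv y)‖ * ‖Sv (y' - y)‖
          ≤ A * (2 * A * T + 2 * A * r) * ‖Sv (y' - y)‖ :=
            mul_le_mul_of_nonneg_right d1 (norm_nonneg _)
        _ ≤ A * (2 * A * T + 2 * A * r) * (A * dist y y') :=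
            mul_le_mul_of_nonneg_left hY (by positivity)
    have c3 : A * (2 * A * T + 2 * A * r) * A ≤ 1 / 2 := by
      rw [hr]
      have e1 : A * (2 * A * T + 2 * A * (8 * A ^ 3 * T ^ 2)) * A
          = 2 * A ^ 3 * T + 16 * A ^ 6 * T ^ 2 := by ring
      rw [e1]
      have e2 : 16 * A ^ 6 * T ^ 2 ≤ 1 / 64 * T := by
        have h := mul_le_mul_of_nonneg_right hbd2 hT0.le
        linarith
      linarith [hbd1, hT1]
    have c4 : A * (2 * A * T + 2 * A * r) * (A * dist y y') ≤ (1 / 2) * dist y y' := by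
      have e : A * (2 * A * T + 2 * A * r) * (A * dist y y')
          = (A * (2 * A * T + 2 * A * r) * A) * dist y y' := by ring
      rw [e]
      exact mul_le_mul_of_nonneg_right c3 dist_nonneg
    linarith
  have htlip : ∀ t t' y, ‖y‖ ≤ r →
      dist (G t y) (G t' y) ≤ 10 * A ^ 3 * |t - t'| := by
    intro t t' y hy
    rw [dist_pi_le_iff (by positivity)]
    intro j
    rw [Real.dist_eq]
    have hdd : G t y j - G t' y j
        = L j.1 (φ t' - φ t)
          + B j.1 ((φ t' + Sv y) + (φ t + Sv y)) (φ t' - φ t) := by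
      have h0 : G t y j - G t' y j
          = (L j.1 (φ t') - L j.1 (φ t))
            + (B j.1 (φ t' + Sv y) (φ t' + Sv y) - B j.1 (φ t + Sv y) (φ t + Sv y)) := by
        simp only [hG]; ring
      rw [h0, hQsub j.1 (φ t' + Sv y) (φ t + Sv y), ← map_sub]
      have h00 : (φ t' + Sv y) - (φ t + Sv y) = φ t' - φ t := by abel
      rw [h00]
    rw [hdd]
    have hΔ : ‖φ t' - φ t‖ ≤ 2 * A * |t - t'| := by
      have := hφlip t' t
      rwa [abs_sub_comm] at this
    have hX : ‖(φ t' + Sv y) + (φ t + Sv y)‖ ≤ 4 * A := by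
      have hSy : ‖Sv y‖ ≤ A * r := le_trans (hAS y) (mul_le_mul_of_nonneg_left hy hA0.le)
      have h5 : A * T ≤ A := by
        have h := mul_le_mul_of_nonneg_left hT1 hA0.le
        linarith
      have h6 : A * r ≤ A := by
        have h := mul_le_mul_of_nonneg_left (hrT.trans hT1) hA0.le
        linarith
      calc ‖(φ t' + Sv y) + (φ t + Sv y)‖ ≤ (‖φ t'‖ + ‖Sv y‖) + (‖φ t‖ + ‖Sv y‖) := by
            have := norm_add_le (φ t' + Sv y) (φ t + Sv y)
            have h7 := norm_add_le (φ t') (Sv y)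
            have h8 := norm_add_le (φ t) (Sv y)
            linarith
        _ ≤ (A * T + A * r) + (A * T + A * r) := by
            have := hφn t'; have := hφn t; linarith
        _ ≤ 4 * A := by linarith
    have hL' : |L j.1 (φ t' - φ t)| ≤ A * (2 * A * |t - t'|) :=
      le_trans (hAL j.1 _) (mul_le_mul_of_nonneg_left hΔ hA0.le)
    have hB' : |B j.1 ((φ t' + Sv y) + (φ t + Sv y)) (φ t' - φ t)|
        ≤ A * (4 * A) * (2 * A * |t - t'|) := by
      refine le_trans (hAB j.1 _ _) ?_
      have d1 : A * ‖(φ t' + Sv y) + (φ t + Sv y)‖ ≤ A * (4 * A) :=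
        mul_le_mul_of_nonneg_left hX hA0.le
      calc A * ‖(φ t' + Sv y) + (φ t + Sv y)‖ * ‖φ t' - φ t‖
          ≤ A * (4 * A) * ‖φ t' - φ t‖ := mul_le_mul_of_nonneg_right d1 (norm_nonneg _)
        _ ≤ A * (4 * A) * (2 * A * |t - t'|) :=
            mul_le_mul_of_nonneg_left hΔ (by positivity)
    have htot := abs_add_le (L j.1 (φ t' - φ t))
      (B j.1 ((φ t' + Sv y) + (φ t + Sv y)) (φ t' - φ t))
    have hAA : A * (2 * A * |t - t'|) + A * (4 * A) * (2 * A * |t - t'|)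
        ≤ 10 * A ^ 3 * |t - t'| := by
      have e : A * (2 * A * |t - t'|) + A * (4 * A) * (2 * A * |t - t'|)
          = (2 * A ^ 2 + 8 * A ^ 3) * |t - t'| := by ring
      rw [e]
      have hA23 : A ^ 2 ≤ A ^ 3 := pow_le_pow_right₀ hA1 (by norm_num)
      exact mul_le_mul_of_nonneg_right (by linarith) (abs_nonneg _)
    linarith
  -- the fixed point family and its continuity
  have hex : ∀ t : ℝ, ∃ y, ‖y‖ ≤ r ∧ G t y = y := fun t =>
    exists_fixed_point_aux hr0 (G t) (hinv t) (hcon t)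
  choose y hyr hyfix using hex
  have hylip : ∀ t t', dist (y t) (y t') ≤ 20 * A ^ 3 * |t - t'| := by
    intro t t'
    have h0 : dist (y t) (y t') = dist (G t (y t)) (G t' (y t')) := by
      rw [hyfix t, hyfix t']
    have h1 : dist (G t (y t)) (G t' (y t'))
        ≤ dist (G t (y t)) (G t (y t')) + dist (G t (y t')) (G t' (y t')) :=
      dist_triangle _ _ _
    have h2 := hcon t (y t) (y t') (hyr t) (hyr t')
    have h3 := htlip t t' (y t') (hyr t')
    rw [h0]
    linarith
  have hycont : Continuous y := by
    have hKc : (0:ℝ) ≤ 20 * A ^ 3 := by positivity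
    refine (LipschitzWith.of_dist_le_mul (K := Real.toNNReal (20 * A ^ 3)) ?_).continuous
    intro t t'
    rw [Real.coe_toNNReal _ hKc]
    calc dist (y t) (y t') ≤ 20 * A ^ 3 * |t - t'| := hylip t t'
      _ = 20 * A ^ 3 * dist t t' := by rw [Real.dist_eq]
  set wfun : ℝ → E := fun t => φ t + Sv (y t) with hwfun
  have hwcont : Continuous wfun := by
    simp only [hwfun]
    exact hφcont.add (hSvcont.comp hycont)
  set f : ℝ → ℝ := fun t => B j0 (wfun t) (wfun t) with hf
  have hfcont : Continuous f := by
    simp only [hf]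
    have hb : Continuous fun p : E × E => B j0 p.1 p.2 := (B j0).continuous₂
    exact hb.comp (hwcont.prodMk hwcont)
  clear_value wfun f
  -- bounds for f at the endpoints
  have hcrossbd : ∀ (c : E) (t0 : ℝ), ‖c‖ ≤ A → |B j0 c (Sv (y t0))| ≤ A * A * (A * r) := by
    intro c t0 hc
    have he : ‖Sv (y t0)‖ ≤ A * r :=
      le_trans (hAS _) (mul_le_mul_of_nonneg_left (hyr t0) hA0.le)
    have c2 : ‖c‖ * ‖Sv (y t0)‖ ≤ A * (A * r) :=
      mul_le_mul hc he (norm_nonneg _) hA0.le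
    calc |B j0 c (Sv (y t0))| ≤ A * ‖c‖ * ‖Sv (y t0)‖ := hAB j0 _ _
      _ = A * (‖c‖ * ‖Sv (y t0)‖) := by ring
      _ ≤ A * (A * (A * r)) := mul_le_mul_of_nonneg_left c2 hA0.le
      _ = A * A * (A * r) := by ring
  have hquadbd : ∀ t0 : ℝ, |B j0 (Sv (y t0)) (Sv (y t0))| ≤ A * (A * r) * (A * r) := by
    intro t0
    have he : ‖Sv (y t0)‖ ≤ A * r :=
      le_trans (hAS _) (mul_le_mul_of_nonneg_left (hyr t0) hA0.le)
    have c2 : ‖Sv (y t0)‖ * ‖Sv (y t0)‖ ≤ (A * r) * (A * r) :=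
      mul_le_mul he he (norm_nonneg _) (by positivity)
    calc |B j0 (Sv (y t0)) (Sv (y t0))| ≤ A * ‖Sv (y t0)‖ * ‖Sv (y t0)‖ := hAB j0 _ _
      _ = A * (‖Sv (y t0)‖ * ‖Sv (y t0)‖) := by ring
      _ ≤ A * ((A * r) * (A * r)) := mul_le_mul_of_nonneg_left c2 hA0.le
      _ = A * (A * r) * (A * r) := by ring
  have hnum1 : 2 * T * (A * A * (A * r)) ≤ 1 / 64 * T ^ 2 := by
    rw [hr]
    have h := mul_le_mul_of_nonneg_right hbd2 (sq_nonneg T)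
    nlinarith [h]
  have hnum2 : A * (A * r) * (A * r) ≤ 1 / 16 * T ^ 2 := by
    rw [hr]
    have h := mul_le_mul_of_nonneg_right hbd3 (by positivity : (0:ℝ) ≤ T ^ 3)
    have h2 := mul_le_mul_of_nonneg_right hT1 (sq_nonneg T)
    nlinarith [h, h2]
  have hexpand : ∀ (c : E) (t0 : ℝ),
      B j0 (T • c + Sv (y t0)) (T • c + Sv (y t0))
        = T ^ 2 * B j0 c c + 2 * T * B j0 c (Sv (y t0))
          + B j0 (Sv (y t0)) (Sv (y t0)) := by
    intro c t0
    have hsymm := hBsymm j0 (Sv (y t0)) c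
    simp only [map_add, map_smul, ContinuousLinearMap.add_apply,
      ContinuousLinearMap.coe_smul', Pi.smul_apply, smul_eq_mul]
    rw [hsymm]; ring
  have hfT : T ^ 2 / 2 ≤ f T := by
    have hw : wfun T = T • a + Sv (y T) := by simp only [hwfun, hφT]
    have hval : f T = T ^ 2 * B j0 a a + 2 * T * B j0 a (Sv (y T))
        + B j0 (Sv (y T)) (Sv (y T)) := by
      simp only [hf, hw]; exact hexpand a T
    have d1 : -(A * A * (A * r)) ≤ B j0 a (Sv (y T)) := neg_le_of_abs_le (hcrossbd a T haA)
    have d2 : -(A * (A * r) * (A * r)) ≤ B j0 (Sv (y T)) (Sv (y T)) :=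
      neg_le_of_abs_le (hquadbd T)
    have d3 : T ^ 2 * (3 / 4) ≤ T ^ 2 * B j0 a a :=
      mul_le_mul_of_nonneg_left hQa (sq_nonneg T)
    have d4 : 2 * T * (-(A * A * (A * r))) ≤ 2 * T * B j0 a (Sv (y T)) :=
      mul_le_mul_of_nonneg_left d1 (by positivity)
    rw [hval]
    linarith [hnum1, hnum2]
  have hfmT : f (-T) ≤ -(T ^ 2 / 2) := by
    have hw : wfun (-T) = T • b + Sv (y (-T)) := by simp only [hwfun, hφmT]
    have hval : f (-T) = T ^ 2 * B j0 b b + 2 * T * B j0 b (Sv (y (-T)))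
        + B j0 (Sv (y (-T))) (Sv (y (-T))) := by
      simp only [hf, hw]; exact hexpand b (-T)
    have d1 : B j0 b (Sv (y (-T))) ≤ A * A * (A * r) := le_of_abs_le (hcrossbd b (-T) hbA)
    have d2 : B j0 (Sv (y (-T))) (Sv (y (-T))) ≤ A * (A * r) * (A * r) :=
      le_of_abs_le (hquadbd (-T))
    have d3 : T ^ 2 * B j0 b b ≤ T ^ 2 * (-(3 / 4)) :=
      mul_le_mul_of_nonneg_left hQb (sq_nonneg T)
    have d4 : 2 * T * B j0 b (Sv (y (-T))) ≤ 2 * T * (A * A * (A * r)) :=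
      mul_le_mul_of_nonneg_left d1 (by positivity)
    rw [hval]
    linarith [hnum1, hnum2]
  -- intermediate value theorem
  have humem : u j0 ∈ Set.Icc (f (-T)) (f T) := by
    have := hu' j0
    rw [hρ] at this
    have h := abs_le.1 this
    exact ⟨by linarith [h.1], by linarith [h.2]⟩
  obtain ⟨t, htmem, hft⟩ :=
    intermediate_value_Icc (by linarith : -T ≤ T) hfcont.continuousOn humem
  refine ⟨wfun t, ?_⟩
  intro j
  by_cases hj : j = j0
  · subst hj
    rw [hL1]
    simp only [ContinuousLinearMap.zero_apply, zero_add]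
    rw [← hft]
    simp only [hf]
  · have h1 := congrFun (hyfix t) (⟨j, hj⟩ : {i : Fin n // i ≠ j0})
    simp only [hG] at h1
    have h2 : L j (wfun t) = L j (φ t) + y t ⟨j, hj⟩ := by
      simp only [hwfun, map_add]
      rw [hSL ⟨j, hj⟩ (y t)]
    have h3 : B j (wfun t) (wfun t) = B j (φ t + Sv (y t)) (φ t + Sv (y t)) := by
      simp only [hwfun]
    rw [h2, h3]
    linarith [h1]
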